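/- (Locality of interaction-picture products) Under the stated setup, let 𝖧₀ be any operator on ℂ^{[L]ⁿ} ⊗ H that is block-diagonal in the basis {|l⃗⟩} (i.e., 𝖧₀ = Σ_{l⃗} |l⃗⟩⟨l⃗| ⊗ K_{l⃗} for some operators K_{l⃗} on H), let 𝖧_I = Σ_{m⃗∈M, m⃗≠0⃗} Add_{m⃗}^L ⊗ H_{m⃗}, and define 𝖧_I(s) = e^{i𝖧₀ s} 𝖧_I e^{−i𝖧₀ s}. Then for any j ≥ 1, any times t₁,…,t_j ∈ ℝ, and any l⃗, l⃗′ ∈ [L]ⁿ with j · m_max < d^L(l⃗, l⃗′), the block ⟨l⃗| 𝖧_I(t_j) ⋯ 𝖧_I(t₁) |l⃗′⟩ equals 0, where m_max bounds the Euclidean norm |m⃗| ≤ m_max for all m⃗ ∈ M. -/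

import Mathlib

set_option maxHeartbeats 1000000
set_option synthInstance.maxHeartbeats 400000

open scoped BigOperators
open Complex

noncomputable section

namespace MultiPeriodic

/-- The representative of `a : ZMod N` (with `N = 2L`) in `[L] = {-L+1, …, L}`. -/
def sval {N : ℕ} [NeZero N] (a : ZMod N) : ℤ :=
  if 2 * a.val ≤ N then (a.val : ℤ) else (a.val : ℤ) - N

/-- The torus distance `d^L` on `[L]ⁿ` (realized as `(ZMod (2L))ⁿ`). -/
def torusDist {n N : ℕ} [NeZero N] (l l' : Fin n → ZMod N) : ℝ :=
  Real.sqrt (∑ i, ((min ((l i - l' i).val) (N - (l i - l' i).val) : ℕ) : ℝ) ^ 2)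

variable {H : Type} [NormedAddCommGroup H] [InnerProductSpace ℂ H]

/-- The Floquet–Hilbert space `ℂ^{[L]ⁿ} ⊗ H`, realized as the `ℓ²`-space of
`H`-valued functions on the torus `[L]ⁿ = (ZMod (2L))ⁿ`. -/
abbrev FSpace (n N : ℕ) (H : Type) [NormedAddCommGroup H] [InnerProductSpace ℂ H] : Type :=
  PiLp 2 (fun _ : Fin n → ZMod N => H)

instance {n N : ℕ} [CompleteSpace H] : CompleteSpace (FSpace n N H) :=
  inferInstanceAs (CompleteSpace (PiLp 2 (fun _ : Fin n → ZMod N => H)))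

variable {n N : ℕ} [NeZero N]

/-- Inclusion `H →L ℂ^{[L]ⁿ} ⊗ H` of the component labelled by `l`. -/
def inclL (l : Fin n → ZMod N) : H →L[ℂ] FSpace n N H :=
  ((PiLp.continuousLinearEquiv 2 ℂ (fun _ : Fin n → ZMod N => H)).symm.toContinuousLinearMap).comp
    (ContinuousLinearMap.pi (fun l' => if l' = l then ContinuousLinearMap.id ℂ H else 0))

/-- Projection `ℂ^{[L]ⁿ} ⊗ H →L H` onto the component labelled by `l`. -/
def projL (l : Fin n → ZMod N) : FSpace n N H →L[ℂ] H :=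
  (ContinuousLinearMap.proj l).comp
    (PiLp.continuousLinearEquiv 2 ℂ (fun _ : Fin n → ZMod N => H)).toContinuousLinearMap

/-- The operator-valued block `⟨l| A |l'⟩` of an operator `A` on `ℂ^{[L]ⁿ} ⊗ H`. -/
def block (A : FSpace n N H →L[ℂ] FSpace n N H) (l l' : Fin n → ZMod N) : H →L[ℂ] H :=
  (projL l).comp (A.comp (inclL l'))

/-- The canonical map of an integer vector `m⃗ ∈ ℤⁿ` into the torus `(ZMod N)ⁿ`. -/
def mcast (m : Fin n → ℤ) : Fin n → ZMod N := fun i => ((m i : ZMod N))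

/-- `Add_{m⃗}^L = Σ_{l⃗∈[L]ⁿ} |l⃗⊕m⃗⟩⟨l⃗|` (tensored with the identity on `H`). -/
def addOp (m : Fin n → ℤ) : FSpace n N H →L[ℂ] FSpace n N H :=
  ∑ l : Fin n → ZMod N, (inclL (l + mcast m)).comp (projL l)

/-- `l⃗ · ω⃗`, where `l⃗ ∈ [L]ⁿ` is identified with its representative in `{-L+1,…,L}ⁿ`. -/
def ldotω (ω : Fin n → ℝ) (l : Fin n → ZMod N) : ℝ :=
  ∑ i, (sval (l i) : ℝ) * ω i

/-- `m⃗ · ω⃗` for an integer vector `m⃗`. -/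
def mdotω (ω : Fin n → ℝ) (m : Fin n → ℤ) : ℝ :=
  ∑ i, (m i : ℝ) * ω i

/-- The linear-potential Hamiltonian `𝖧_LP^L = Σ_{l⃗∈[L]ⁿ} (l⃗·ω⃗) |l⃗⟩⟨l⃗| ⊗ I`. -/
def HLP (ω : Fin n → ℝ) : FSpace n N H →L[ℂ] FSpace n N H :=
  ∑ l : Fin n → ZMod N, ((ldotω ω l : ℝ) : ℂ) • ((inclL l).comp (projL l))

/-- The hopping part `Σ_{m⃗∈M} Add_{m⃗}^L ⊗ H_{m⃗}` of the effective Hamiltonian. -/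
def HAdd (M : Finset (Fin n → ℤ)) (Hm : (Fin n → ℤ) → H →L[ℂ] H) :
    FSpace n N H →L[ℂ] FSpace n N H :=
  ∑ m ∈ M, ∑ l : Fin n → ZMod N, (inclL (l + mcast m)).comp ((Hm m).comp (projL l))

/-- The effective Hamiltonian `𝖧^L = Σ_{m⃗∈M} Add_{m⃗}^L ⊗ H_{m⃗} − 𝖧_LP^L`. -/
def Heff (M : Finset (Fin n → ℤ)) (Hm : (Fin n → ℤ) → H →L[ℂ] H) (ω : Fin n → ℝ) :
    FSpace n N H →L[ℂ] FSpace n N H :=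
  HAdd M Hm - HLP ω

/-- The multi-periodic Hamiltonian `H(t) = Σ_{m⃗∈M} H_{m⃗} e^{−i m⃗·ω⃗ t}`. -/
def Ht (M : Finset (Fin n → ℤ)) (Hm : (Fin n → ℤ) → H →L[ℂ] H) (ω : Fin n → ℝ) (t : ℝ) :
    H →L[ℂ] H :=
  ∑ m ∈ M, Complex.exp (-Complex.I * ((mdotω ω m : ℝ) : ℂ) * (t : ℝ)) • Hm m

variable [FiniteDimensional ℂ H]

/-- The time evolution `e^{−i 𝖧^L t}` generated by the effective Hamiltonian. -/
def expEff (M : Finset (Fin n → ℤ)) (Hm : (Fin n → ℤ) → H →L[ℂ] H) (ω : Fin n → ℝ) (t : ℝ) :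
    FSpace n N H →L[ℂ] FSpace n N H :=
  NormedSpace.exp ((-Complex.I * (t : ℂ)) • Heff M Hm ω)

/-- `U_{l⃗′}^{L}(t) = Σ_{l⃗∈[L]ⁿ} e^{−i l⃗·ω⃗ t} ⟨l⃗| e^{−i 𝖧^{L} t} |l⃗′⟩`. -/
def Ulp (M : Finset (Fin n → ℤ)) (Hm : (Fin n → ℤ) → H →L[ℂ] H) (ω : Fin n → ℝ)
    (l' : Fin n → ZMod N) (t : ℝ) : H →L[ℂ] H :=
  ∑ l : Fin n → ZMod N,
    Complex.exp (-Complex.I * ((ldotω ω l : ℝ) : ℂ) * (t : ℂ)) •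
      block (expEff M Hm ω t) l l'

/-- `γ`, the supremum over `x⃗ ∈ [0,2π)ⁿ` of `‖Σ_{m⃗∈M, m⃗≠0} H_{m⃗} e^{−i m⃗·x⃗}‖`. -/
def gammaSup (n : ℕ) (M : Finset (Fin n → ℤ)) (Hm : (Fin n → ℤ) → H →L[ℂ] H) : ℝ :=
  sSup {r : ℝ | ∃ x : Fin n → ℝ, (∀ i, x i ∈ Set.Ico (0 : ℝ) (2 * Real.pi)) ∧
    r = ‖∑ m ∈ M.erase 0, Complex.exp (-Complex.I * ((∑ i, (m i : ℝ) * x i : ℝ) : ℂ)) • Hm m‖}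

/-- The constant `C_{n,m_max} = 4 (2√π m_max)ⁿ (Γ(n)/Γ(n/2)) e^{√n/m_max}`. -/
def Cnm (n : ℕ) (mmax : ℝ) : ℝ :=
  4 * (2 * Real.sqrt Real.pi * mmax) ^ n * (Real.Gamma n / Real.Gamma (n / 2)) *
    Real.exp (Real.sqrt n / mmax)

/-- The Euclidean norm of an integer vector. -/
def enorm' (m : Fin n → ℤ) : ℝ := Real.sqrt (∑ i, ((m i : ℝ)) ^ 2)

end MultiPeriodic
namespace MultiPeriodic

variable {H : Type} [NormedAddCommGroup H] [InnerProductSpace ℂ H] [FiniteDimensional ℂ H]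
variable {n N : ℕ} [NeZero N]

/-- The interaction picture `𝖧_I(s) = e^{i𝖧₀s} 𝖧_I e^{−i𝖧₀s}`. -/
def intPicture (H₀ HI : FSpace n N H →L[ℂ] FSpace n N H) (s : ℝ) :
    FSpace n N H →L[ℂ] FSpace n N H :=
  (NormedSpace.exp ((Complex.I * (s : ℂ)) • H₀)).comp
    (HI.comp (NormedSpace.exp ((-Complex.I * (s : ℂ)) • H₀)))

end MultiPeriodic

namespace MultiPeriodic

variable {H : Type} [NormedAddCommGroup H] [InnerProductSpace ℂ H]
variable {n N : ℕ} [NeZero N]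

lemma projL_inclL_apply (k l : Fin n → ZMod N) (x : H) :
    projL k (inclL l x) = if k = l then x else 0 := by
  have h0 : projL (H := H) k (inclL l x)
      = (if k = l then ContinuousLinearMap.id ℂ H else 0) x := rfl
  rw [h0]
  split_ifs <;> rfl

lemma sum_inclL_projL_apply (x : FSpace n N H) :
    ∑ l : Fin n → ZMod N, inclL l (projL l x) = x := by
  refine (WithLp.ext_iff (p := 2)).2 (funext fun k => ?_)
  have : (∑ l : Fin n → ZMod N, inclL l (projL l x)) k
      = ∑ l : Fin n → ZMod N, (inclL l (projL l x) : FSpace n N H) k :=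
    by rw [WithLp.ofLp_sum, Finset.sum_apply]
  rw [this]
  have hterm : ∀ l : Fin n → ZMod N, (inclL l (projL l x) : FSpace n N H) k
      = if k = l then x k else 0 := by
    intro l
    have h0 : (inclL l (projL l x) : FSpace n N H) k
        = (if k = l then ContinuousLinearMap.id ℂ H else 0) (projL l x) := rfl
    rw [h0]
    split_ifs with hkl
    · subst hkl; rfl
    · rfl
  simp only [hterm]
  simp

lemma block_apply (A : FSpace n N H →L[ℂ] FSpace n N H) (l l' : Fin n → ZMod N) (x : H) :
    block A l l' x = projL l (A (inclL l' x)) := rfl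

lemma block_comp (A B : FSpace n N H →L[ℂ] FSpace n N H) (l l' : Fin n → ZMod N) :
    block (A.comp B) l l' = ∑ k : Fin n → ZMod N, (block A l k).comp (block B k l') := by
  ext x
  simp only [ContinuousLinearMap.sum_apply, ContinuousLinearMap.comp_apply, block_apply]
  rw [← map_sum (projL l), ← map_sum A, sum_inclL_projL_apply]

lemma block_one (l l' : Fin n → ZMod N) :
    block (1 : FSpace n N H →L[ℂ] FSpace n N H) l l'
      = if l = l' then ContinuousLinearMap.id ℂ H else 0 := by
  ext x
  rw [block_apply]
  show projL l (inclL l' x) = _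
  rw [projL_inclL_apply]
  split_ifs <;> rfl

lemma torusDist_eq (a b : Fin n → ZMod N) :
    torusDist a b = Real.sqrt (∑ i, (((a i - b i).valMinAbs.natAbs : ℕ) : ℝ) ^ 2) := by
  unfold torusDist
  congr 1
  refine Finset.sum_congr rfl fun i _ => ?_
  rw [ZMod.valMinAbs_natAbs_eq_min]

lemma torusDist_self (a : Fin n → ZMod N) : torusDist a a = 0 := by
  rw [torusDist_eq]
  simp

lemma torusDist_triangle (a b c : Fin n → ZMod N) :
    torusDist a c ≤ torusDist a b + torusDist b c := by
  rw [torusDist_eq, torusDist_eq, torusDist_eq]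
  set u : EuclideanSpace ℝ (Fin n) := WithLp.toLp 2 (fun i => (((a i - b i).valMinAbs.natAbs : ℕ) : ℝ)) with hu
  set v : EuclideanSpace ℝ (Fin n) := WithLp.toLp 2 (fun i => (((b i - c i).valMinAbs.natAbs : ℕ) : ℝ)) with hv
  have hnormu : ‖u‖ = Real.sqrt (∑ i, (((a i - b i).valMinAbs.natAbs : ℕ) : ℝ) ^ 2) := by
    rw [EuclideanSpace.norm_eq]
    congr 1
    refine Finset.sum_congr rfl fun i _ => ?_
    rw [Real.norm_eq_abs, _root_.sq_abs]
  have hnormv : ‖v‖ = Real.sqrt (∑ i, (((b i - c i).valMinAbs.natAbs : ℕ) : ℝ) ^ 2) := by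
    rw [EuclideanSpace.norm_eq]
    congr 1
    refine Finset.sum_congr rfl fun i _ => ?_
    rw [Real.norm_eq_abs, _root_.sq_abs]
  have h1 : Real.sqrt (∑ i, (((a i - c i).valMinAbs.natAbs : ℕ) : ℝ) ^ 2) ≤ ‖u + v‖ := by
    rw [EuclideanSpace.norm_eq]
    apply Real.sqrt_le_sqrt
    refine Finset.sum_le_sum fun i _ => ?_
    have key : (((a i - c i).valMinAbs.natAbs : ℕ) : ℝ) ≤ u i + v i := by
      have habc : a i - c i = (a i - b i) + (b i - c i) := by ring
      have h2 := ZMod.natAbs_valMinAbs_add_le (a i - b i) (b i - c i)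
      have h3 := Int.natAbs_add_le (a i - b i).valMinAbs (b i - c i).valMinAbs
      rw [habc]
      have := h2.trans h3
      simp only [hu, hv]
      exact_mod_cast this
    have hpos : (0 : ℝ) ≤ (((a i - c i).valMinAbs.natAbs : ℕ) : ℝ) := Nat.cast_nonneg _
    calc (((a i - c i).valMinAbs.natAbs : ℕ) : ℝ) ^ 2 ≤ (u i + v i) ^ 2 := by
          apply pow_le_pow_left₀ hpos key
      _ = ‖(u + v) i‖ ^ 2 := by
          have : (u + v) i = u i + v i := rfl
          rw [this, Real.norm_eq_abs, _root_.sq_abs]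
  calc Real.sqrt (∑ i, (((a i - c i).valMinAbs.natAbs : ℕ) : ℝ) ^ 2) ≤ ‖u + v‖ := h1
    _ ≤ ‖u‖ + ‖v‖ := norm_add_le u v
    _ = _ := by rw [hnormu, hnormv]

lemma torusDist_add_mcast (b : Fin n → ZMod N) (m : Fin n → ℤ) :
    torusDist (b + mcast m) b ≤ enorm' m := by
  rw [torusDist_eq, enorm']
  apply Real.sqrt_le_sqrt
  refine Finset.sum_le_sum fun i _ => ?_
  have h1 : ((b + mcast m : Fin n → ZMod N)) i - b i = ((m i : ZMod N)) := by
    rw [Pi.add_apply, add_sub_cancel_left]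
    rfl
  rw [h1]
  have h2 : ((m i : ZMod N)).valMinAbs.natAbs ≤ (m i).natAbs :=
    ZMod.natAbs_min_of_le_div_two N _ _ (by rw [ZMod.coe_valMinAbs])
      (ZMod.natAbs_valMinAbs_le _)
  calc ((((m i : ZMod N)).valMinAbs.natAbs : ℕ) : ℝ) ^ 2
      ≤ (((m i).natAbs : ℕ) : ℝ) ^ 2 := by
        apply pow_le_pow_left₀ (Nat.cast_nonneg _)
        exact_mod_cast h2
    _ = ((m i : ℝ)) ^ 2 := by
        rw [Nat.cast_natAbs]
        push_cast
        rw [_root_.sq_abs]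

variable [FiniteDimensional ℂ H]

lemma commute_H0_P (K : (Fin n → ZMod N) → H →L[ℂ] H) (l' : Fin n → ZMod N) :
    Commute (∑ l : Fin n → ZMod N, (inclL l).comp ((K l).comp (projL l)))
      ((inclL (H := H) l').comp (projL l')) := by
  refine ContinuousLinearMap.ext fun x => ?_
  rw [ContinuousLinearMap.mul_apply, ContinuousLinearMap.mul_apply]
  simp only [ContinuousLinearMap.sum_apply, ContinuousLinearMap.comp_apply]
  have hL : ∀ k : Fin n → ZMod N, inclL k (K k (projL k (inclL l' (projL l' x))))
      = if k = l' then inclL (H := H) l' (K l' (projL l' x)) else 0 := by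
    intro k
    rw [projL_inclL_apply]
    split_ifs with hk
    · subst hk; rfl
    · simp
  have hR : ∀ k : Fin n → ZMod N, (projL (H := H) l') (inclL k (K k (projL k x)))
      = if l' = k then K k (projL k x) else 0 := fun k => projL_inclL_apply _ _ _
  calc (∑ k : Fin n → ZMod N, inclL k (K k (projL k (inclL l' (projL l' x)))))
      = ∑ k : Fin n → ZMod N,
          if k = l' then inclL (H := H) l' (K l' (projL l' x)) else 0 := by
        exact Finset.sum_congr rfl fun k _ => hL k
    _ = inclL l' (K l' (projL l' x)) := by
        rw [Finset.sum_ite_eq' Finset.univ l']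
        simp
    _ = inclL l' (projL l' (∑ k : Fin n → ZMod N, inclL k (K k (projL k x)))) := by
        rw [map_sum]
        rw [Finset.sum_congr rfl fun k _ => hR k, Finset.sum_ite_eq Finset.univ l']
        simp

lemma block_exp_offdiag (K : (Fin n → ZMod N) → H →L[ℂ] H) (c : ℂ)
    {l l' : Fin n → ZMod N} (h : l ≠ l') :
    block (NormedSpace.exp
      (c • ∑ k : Fin n → ZMod N, (inclL k).comp ((K k).comp (projL k)))) l l' = 0 := by
  set H₀ := ∑ k : Fin n → ZMod N, (inclL (H := H) k).comp ((K k).comp (projL k)) with hH₀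
  set E := NormedSpace.exp (c • H₀) with hE
  set P := (inclL (H := H) l').comp (projL l') with hP
  have hc : Commute E P := ((commute_H0_P K l').smul_left c).exp_left
  ext x
  rw [block_apply]
  have h1 : inclL l' x = P (inclL l' x) := by
    rw [hP, ContinuousLinearMap.comp_apply, projL_inclL_apply, if_pos rfl]
  rw [h1]
  have h2 : E (P (inclL l' x)) = P (E (inclL l' x)) := by
    have := DFunLike.congr_fun hc (inclL l' x)
    rw [ContinuousLinearMap.mul_apply, ContinuousLinearMap.mul_apply] at this
    exact this
  rw [h2, hP, ContinuousLinearMap.comp_apply, projL_inclL_apply, if_neg h]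
  rfl

lemma block_HAdd_eq_zero (Me : Finset (Fin n → ℤ)) (Hm : (Fin n → ℤ) → H →L[ℂ] H)
    {a b : Fin n → ZMod N} (h : ∀ m ∈ Me, a ≠ b + mcast m) :
    block (HAdd (N := N) Me Hm) a b = 0 := by
  ext x
  rw [block_apply]
  unfold HAdd
  simp only [ContinuousLinearMap.sum_apply, ContinuousLinearMap.comp_apply, map_sum]
  rw [Finset.sum_eq_zero]
  · rfl
  intro m hm
  rw [Finset.sum_eq_zero]
  intro k _
  rcases eq_or_ne k b with rfl | hkb
  · rw [projL_inclL_apply a (k + mcast m), if_neg (h m hm)]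
  · rw [projL_inclL_apply k b, if_neg hkb]
    simp

lemma block_intPicture_eq_zero (K : (Fin n → ZMod N) → H →L[ℂ] H)
    (H₀ HI : FSpace n N H →L[ℂ] FSpace n N H)
    (hH₀ : H₀ = ∑ l : Fin n → ZMod N, (inclL l).comp ((K l).comp (projL l)))
    (s : ℝ) {a b : Fin n → ZMod N} (h : block HI a b = 0) :
    block (intPicture H₀ HI s) a b = 0 := by
  unfold intPicture
  rw [block_comp]
  refine Finset.sum_eq_zero fun k _ => ?_
  rcases eq_or_ne a k with rfl | hak
  · rw [block_comp, Finset.sum_eq_zero, ContinuousLinearMap.comp_zero]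
    intro k' _
    rcases eq_or_ne k' b with rfl | hkb
    · rw [h, ContinuousLinearMap.zero_comp]
    · rw [hH₀, block_exp_offdiag K _ hkb, ContinuousLinearMap.comp_zero]
  · rw [hH₀, block_exp_offdiag K _ hak, ContinuousLinearMap.zero_comp]

lemma prod_block_locality (mmax : ℝ)
    (ops : List (FSpace n N H →L[ℂ] FSpace n N H))
    (hops : ∀ A ∈ ops, ∀ a b : Fin n → ZMod N, block A a b ≠ 0 → torusDist a b ≤ mmax) :
    ∀ a b : Fin n → ZMod N, block ops.prod a b ≠ 0 →
      torusDist a b ≤ (ops.length : ℝ) * mmax := by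
  induction ops with
  | nil =>
      intro a b h
      rcases eq_or_ne a b with rfl | hab
      · rw [torusDist_self]
        simp
      · exact absurd (by rw [List.prod_nil, block_one, if_neg hab]) h
  | cons A tl ih =>
      intro a b h
      rw [List.prod_cons] at h
      have hmul : (A * tl.prod) = A.comp tl.prod := rfl
      rw [hmul, block_comp] at h
      obtain ⟨k, -, hk⟩ := Finset.exists_ne_zero_of_sum_ne_zero h
      have h1 : block A a k ≠ 0 := fun hz => hk (by rw [hz, ContinuousLinearMap.zero_comp])
      have h2 : block tl.prod k b ≠ 0 := fun hz => hk (by rw [hz, ContinuousLinearMap.comp_zero])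
      have d1 := hops A (List.mem_cons_self) a k h1
      have d2 := ih (fun B hB a b => hops B (List.mem_cons_of_mem _ hB) a b) k b h2
      have d3 := torusDist_triangle a k b
      simp only [List.length_cons]
      push_cast
      linarith

end MultiPeriodic

/-- **Locality of interaction-picture products.**
Let `𝖧₀ = Σ_{l⃗} |l⃗⟩⟨l⃗| ⊗ K_{l⃗}` be block diagonal, `𝖧_I = Σ_{m⃗≠0} Add_{m⃗}^L ⊗ H_{m⃗}`
with `|m⃗| ≤ m_max` for all `m⃗ ∈ M`, and `𝖧_I(s) = e^{i𝖧₀s} 𝖧_I e^{−i𝖧₀s}`. Then for any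
`j ≥ 1`, times `t₁,…,t_j` and `l⃗, l⃗′` with `j·m_max < d^L(l⃗,l⃗′)`, the block
`⟨l⃗| 𝖧_I(t_j) ⋯ 𝖧_I(t₁) |l⃗′⟩` vanishes. -/
theorem interaction_picture_locality
    {H : Type} [NormedAddCommGroup H] [InnerProductSpace ℂ H] [FiniteDimensional ℂ H]
    (n : ℕ) (hn : 1 ≤ n)
    (M : Finset (Fin n → ℤ)) (Hm : (Fin n → ℤ) → H →L[ℂ] H)
    (mmax : ℝ) (hM : ∀ m ∈ M, MultiPeriodic.enorm' m ≤ mmax)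
    (L : ℕ) [NeZero L]
    (K : (Fin n → ZMod (2 * L)) → H →L[ℂ] H)
    (H₀ : MultiPeriodic.FSpace n (2 * L) H →L[ℂ] MultiPeriodic.FSpace n (2 * L) H)
    (hH₀ : H₀ = ∑ l : Fin n → ZMod (2 * L),
      (MultiPeriodic.inclL l).comp ((K l).comp (MultiPeriodic.projL l)))
    (j : ℕ) (hj : 1 ≤ j) (ts : Fin j → ℝ)
    (l l' : Fin n → ZMod (2 * L))
    (hd : (j : ℝ) * mmax < MultiPeriodic.torusDist l l') :
    MultiPeriodic.block
      ((List.ofFn (fun k : Fin j =>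
        MultiPeriodic.intPicture H₀ (MultiPeriodic.HAdd (N := 2 * L) (M.erase 0) Hm)
          (ts k))).prod)
      l l' = 0 := by
  by_contra hne
  have hops : ∀ A ∈ List.ofFn (fun k : Fin j =>
        MultiPeriodic.intPicture H₀ (MultiPeriodic.HAdd (N := 2 * L) (M.erase 0) Hm) (ts k)),
      ∀ a b : Fin n → ZMod (2 * L), MultiPeriodic.block A a b ≠ 0 →
        MultiPeriodic.torusDist a b ≤ mmax := by
    intro A hA a b hblock
    rw [List.mem_ofFn] at hA
    obtain ⟨k, rfl⟩ := hA
    have hHAdd : MultiPeriodic.block (MultiPeriodic.HAdd (N := 2 * L) (M.erase 0) Hm) a b ≠ 0 :=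
      fun hz => hblock (MultiPeriodic.block_intPicture_eq_zero K H₀ _ hH₀ (ts k) hz)
    have hex : ∃ m ∈ M.erase 0, a = b + MultiPeriodic.mcast m := by
      by_contra hcon
      push_neg at hcon
      exact hHAdd (MultiPeriodic.block_HAdd_eq_zero _ _ hcon)
    obtain ⟨m, hm, rfl⟩ := hex
    calc MultiPeriodic.torusDist (b + MultiPeriodic.mcast m) b
        ≤ MultiPeriodic.enorm' m := MultiPeriodic.torusDist_add_mcast b m
      _ ≤ mmax := hM m (Finset.mem_of_mem_erase hm)
  have key := MultiPeriodic.prod_block_locality mmax _ hops l l' hne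
  rw [List.length_ofFn] at key
  exact absurd hd (not_lt.mpr key)
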